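/- arXiv:2008.11661 — 5 statements merged into one kernel-verified Lean document; each statement's English description precedes it below -/
import Mathlib

section
/- If C(x) and D(x) are formal power series satisfying D(x) = 1 + C(x·D(x)²) and D(x) = 1 + x·D(x) + 2x²·D'(x) with C(0) = 0, then 2x·C(x)·C'(x) = C(x)·(1 + C(x)) - x. -/
open PowerSeries Finset

/-- Composition `f(g(X))` of formal power series (meaningful when `g` has zero
constant term). -/
noncomputable def pcomp (f g : ℚ⟦X⟧) : ℚ⟦X⟧ :=
  PowerSeries.mk fun n => ∑ k ∈ Finset.range (n + 1),
    PowerSeries.coeff k f * PowerSeries.coeff n (g ^ k)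

/-- Division of a power series by `X` (dropping the constant term). -/
noncomputable def shiftDiv (f : ℚ⟦X⟧) : ℚ⟦X⟧ :=
  PowerSeries.mk fun n => PowerSeries.coeff (n + 1) f

lemma coeff_pcomp (f g : ℚ⟦X⟧) (n : ℕ) :
    PowerSeries.coeff n (pcomp f g) = ∑ k ∈ Finset.range (n + 1),
      PowerSeries.coeff k f * PowerSeries.coeff n (g ^ k) := by
  simp [pcomp]

lemma coeff_pow_zero {g : ℚ⟦X⟧} (hg : constantCoeff g = 0) {k n : ℕ} (hnk : n < k) :
    PowerSeries.coeff n (g ^ k) = 0 := by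
  have : (X : ℚ⟦X⟧) ^ k ∣ g ^ k := pow_dvd_pow_of_dvd (X_dvd_iff.mpr hg) k
  exact X_pow_dvd_iff.mp this n hnk

lemma coeff_pcomp_ext {g : ℚ⟦X⟧} (hg : constantCoeff g = 0) (f : ℚ⟦X⟧) {n N : ℕ}
    (hN : n < N) :
    PowerSeries.coeff n (pcomp f g) = ∑ k ∈ Finset.range N,
      PowerSeries.coeff k f * PowerSeries.coeff n (g ^ k) := by
  rw [coeff_pcomp]
  refine Finset.sum_subset (Finset.range_subset_range.mpr hN) ?_
  intro k hk hk'
  simp only [Finset.mem_range, not_lt] at hk'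
  rw [coeff_pow_zero hg (lt_of_lt_of_le (Nat.lt_of_succ_le hk') (le_refl k)), mul_zero]

lemma pcomp_add (f₁ f₂ g : ℚ⟦X⟧) : pcomp (f₁ + f₂) g = pcomp f₁ g + pcomp f₂ g := by
  ext n
  simp [coeff_pcomp, add_mul, Finset.sum_add_distrib]

lemma pcomp_neg (f g : ℚ⟦X⟧) : pcomp (-f) g = -pcomp f g := by
  ext n
  simp [coeff_pcomp, Finset.sum_neg_distrib]

lemma pcomp_sub (f₁ f₂ g : ℚ⟦X⟧) : pcomp (f₁ - f₂) g = pcomp f₁ g - pcomp f₂ g := by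
  rw [sub_eq_add_neg, pcomp_add, pcomp_neg, sub_eq_add_neg]

lemma pcomp_C (a : ℚ) (g : ℚ⟦X⟧) : pcomp (PowerSeries.C a) g = PowerSeries.C a := by
  ext n
  rw [coeff_pcomp]
  rw [Finset.sum_eq_single 0]
  · simp [coeff_C]
  · intro k _ hk
    simp [coeff_C, hk]
  · simp

lemma pcomp_X {g : ℚ⟦X⟧} (hg : constantCoeff g = 0) : pcomp X g = g := by
  ext n
  rw [coeff_pcomp]
  rw [Finset.sum_eq_single 1]
  · simp
  · intro k _ hk
    simp [coeff_X, hk]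
  · intro h
    simp only [Finset.mem_range, not_lt] at h
    have hn : n = 0 := by omega
    subst hn
    rw [pow_one, ← coeff_zero_eq_constantCoeff_apply] at *
    rw [hg, mul_zero]

lemma sum_antidiagonal_range (n : ℕ) (φ : ℕ → ℕ → ℚ) (hφ : ∀ i j, n < i + j → φ i j = 0) :
    ∑ k ∈ Finset.range (n + 1), ∑ p ∈ Finset.HasAntidiagonal.antidiagonal k, φ p.1 p.2
      = ∑ i ∈ Finset.range (n + 1), ∑ j ∈ Finset.range (n + 1), φ i j := by
  rw [← Finset.sum_product']
  have hdisj : (↑(Finset.range (n+1)) : Set ℕ).PairwiseDisjoint Finset.HasAntidiagonal.antidiagonal := by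
    intro a _ b _ hab
    simp only [Finset.disjoint_left]
    intro p hpa hpb
    simp only [Finset.HasAntidiagonal.mem_antidiagonal] at hpa hpb
    exact hab (hpa ▸ hpb ▸ rfl)
  rw [← Finset.sum_biUnion hdisj]
  have hset : (Finset.range (n+1)).biUnion Finset.HasAntidiagonal.antidiagonal
      = (Finset.range (n+1) ×ˢ Finset.range (n+1)).filter (fun p => p.1 + p.2 ≤ n) := by
    ext p
    simp only [Finset.mem_biUnion, Finset.HasAntidiagonal.mem_antidiagonal, Finset.mem_filter,
      Finset.mem_product, Finset.mem_range]
    constructor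
    · rintro ⟨k, hk, hp⟩
      omega
    · intro h
      exact ⟨p.1 + p.2, by omega, rfl⟩
  rw [hset, Finset.sum_filter]
  refine Finset.sum_congr rfl ?_
  intro p hp
  by_cases h : p.1 + p.2 ≤ n
  · simp [h]
  · simp [h, hφ p.1 p.2 (by omega)]

lemma pcomp_mul {g : ℚ⟦X⟧} (hg : constantCoeff g = 0) (f h : ℚ⟦X⟧) :
    pcomp (f * h) g = pcomp f g * pcomp h g := by
  ext n
  rw [coeff_pcomp, PowerSeries.coeff_mul]
  have hrhs : ∀ p ∈ Finset.HasAntidiagonal.antidiagonal n,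
      (PowerSeries.coeff p.1 (pcomp f g)) * (PowerSeries.coeff p.2 (pcomp h g))
      = ∑ i ∈ Finset.range (n+1), ∑ j ∈ Finset.range (n+1),
          (PowerSeries.coeff i f * PowerSeries.coeff j h)
            * (PowerSeries.coeff p.1 (g^i) * PowerSeries.coeff p.2 (g^j)) := by
    intro p hp
    simp only [Finset.HasAntidiagonal.mem_antidiagonal] at hp
    rw [coeff_pcomp_ext hg f (show p.1 < n+1 by omega),
        coeff_pcomp_ext hg h (show p.2 < n+1 by omega), Finset.sum_mul_sum]
    refine Finset.sum_congr rfl fun i _ => Finset.sum_congr rfl fun j _ => by ring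
  rw [Finset.sum_congr rfl hrhs, Finset.sum_comm]
  -- now RHS = ∑ i, ∑ p ∈ antidiagonal n, ∑ j ...
  have hrhs2 : ∑ i ∈ Finset.range (n+1), ∑ p ∈ Finset.HasAntidiagonal.antidiagonal n,
        ∑ j ∈ Finset.range (n+1),
          (PowerSeries.coeff i f * PowerSeries.coeff j h)
            * (PowerSeries.coeff p.1 (g^i) * PowerSeries.coeff p.2 (g^j))
      = ∑ i ∈ Finset.range (n+1), ∑ j ∈ Finset.range (n+1),
          (PowerSeries.coeff i f * PowerSeries.coeff j h)
            * PowerSeries.coeff n (g^(i+j)) := by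
    refine Finset.sum_congr rfl fun i _ => ?_
    rw [Finset.sum_comm]
    refine Finset.sum_congr rfl fun j _ => ?_
    rw [pow_add, PowerSeries.coeff_mul, Finset.mul_sum]
  rw [hrhs2]
  -- now LHS
  have hlhs : ∀ k ∈ Finset.range (n+1),
      PowerSeries.coeff k (f * h) * PowerSeries.coeff n (g^k)
      = ∑ p ∈ Finset.HasAntidiagonal.antidiagonal k,
          (PowerSeries.coeff p.1 f * PowerSeries.coeff p.2 h)
            * PowerSeries.coeff n (g^(p.1 + p.2)) := by
    intro k hk
    rw [PowerSeries.coeff_mul, Finset.sum_mul]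
    refine Finset.sum_congr rfl fun p hp => ?_
    simp only [Finset.HasAntidiagonal.mem_antidiagonal] at hp
    rw [hp]
  rw [Finset.sum_congr rfl hlhs]
  exact sum_antidiagonal_range n
    (fun i j => (PowerSeries.coeff i f * PowerSeries.coeff j h)
      * PowerSeries.coeff n (g^(i+j)))
    (fun i j hij => by simp [coeff_pow_zero hg hij])


lemma pcomp_two (g : ℚ⟦X⟧) : pcomp 2 g = 2 := by
  have h2 : (2 : ℚ⟦X⟧) = PowerSeries.C 2 := by
    rw [map_ofNat]
  rw [h2, pcomp_C]

lemma pcomp_deriv {g : ℚ⟦X⟧} (hg : constantCoeff g = 0) (f : ℚ⟦X⟧) :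
    d⁄dX ℚ (pcomp f g) = pcomp (d⁄dX ℚ f) g * d⁄dX ℚ g := by
  ext n
  rw [PowerSeries.coeff_derivative, coeff_pcomp_ext hg f (show n + 1 < n + 2 by omega),
    Finset.sum_mul, PowerSeries.coeff_mul]
  have hrhs : ∑ p ∈ Finset.HasAntidiagonal.antidiagonal n,
      PowerSeries.coeff p.1 (pcomp (d⁄dX ℚ f) g) * PowerSeries.coeff p.2 (d⁄dX ℚ g)
      = ∑ k ∈ Finset.range (n+1), PowerSeries.coeff (k+1) f * ((k : ℚ) + 1)
          * PowerSeries.coeff n (g ^ k * d⁄dX ℚ g) := by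
    have : ∀ p ∈ Finset.HasAntidiagonal.antidiagonal n,
        PowerSeries.coeff p.1 (pcomp (d⁄dX ℚ f) g) * PowerSeries.coeff p.2 (d⁄dX ℚ g)
        = ∑ k ∈ Finset.range (n+1), PowerSeries.coeff (k+1) f * ((k : ℚ) + 1)
            * (PowerSeries.coeff p.1 (g ^ k) * PowerSeries.coeff p.2 (d⁄dX ℚ g)) := by
      intro p hp
      simp only [Finset.HasAntidiagonal.mem_antidiagonal] at hp
      rw [coeff_pcomp_ext hg _ (show p.1 < n+1 by omega), Finset.sum_mul]
      refine Finset.sum_congr rfl fun k _ => ?_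
      rw [PowerSeries.coeff_derivative]
      push_cast
      ring
    rw [Finset.sum_congr rfl this, Finset.sum_comm]
    refine Finset.sum_congr rfl fun k _ => ?_
    rw [← Finset.mul_sum, PowerSeries.coeff_mul]
  rw [hrhs, Finset.sum_range_succ' (fun k => PowerSeries.coeff k f
    * PowerSeries.coeff (n+1) (g ^ k) * ((n : ℚ) + 1))]
  simp only [pow_zero, PowerSeries.coeff_one, Nat.succ_ne_zero, if_false, ite_false,
    zero_mul, mul_zero, add_zero]
  refine Finset.sum_congr rfl fun k _ => ?_
  have hdpow : d⁄dX ℚ (g ^ (k+1)) = ((k : ℚ) + 1) • (g ^ k * d⁄dX ℚ g) := by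
    rw [Derivation.leibniz_pow]
    simp only [Nat.add_sub_cancel, smul_eq_mul, nsmul_eq_mul, PowerSeries.smul_eq_C_mul]
    push_cast [map_add, map_natCast, map_one]
    ring
  have : PowerSeries.coeff (n+1) (g^(k+1)) * ((n:ℚ)+1)
      = ((k : ℚ) + 1) * PowerSeries.coeff n (g ^ k * d⁄dX ℚ g) := by
    rw [← PowerSeries.coeff_derivative, hdpow, map_smul, smul_eq_mul]
  linear_combination (PowerSeries.coeff (k+1) f) * this

lemma coeff_pow_self {g : ℚ⟦X⟧} (hg : constantCoeff g = 0) (k : ℕ) :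
    PowerSeries.coeff k (g ^ k) = (PowerSeries.coeff 1 g) ^ k := by
  have hgx : g = X * shiftDiv g := by
    ext n
    cases n with
    | zero =>
      rw [coeff_zero_eq_constantCoeff_apply, hg, coeff_zero_eq_constantCoeff_apply]
      simp
    | succ m =>
      rw [PowerSeries.coeff_succ_X_mul]
      simp [shiftDiv]
  conv_lhs => rw [hgx]
  rw [mul_pow]
  have hx := PowerSeries.coeff_X_pow_mul ((shiftDiv g) ^ k) k 0
  rw [zero_add] at hx
  rw [hx, coeff_zero_eq_constantCoeff_apply, map_pow]
  congr 1

lemma pcomp_inj {g : ℚ⟦X⟧} (hg0 : constantCoeff g = 0)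
    (hg1 : PowerSeries.coeff 1 g = 1) {f : ℚ⟦X⟧} (h : pcomp f g = 0) : f = 0 := by
  ext k
  induction k using Nat.strong_induction_on with
  | _ k ih =>
    have hk := congrArg (PowerSeries.coeff k) h
    rw [coeff_pcomp, map_zero, Finset.sum_range_succ] at hk
    have hz : ∑ j ∈ Finset.range k, PowerSeries.coeff j f * PowerSeries.coeff k (g ^ j)
        = 0 := by
      refine Finset.sum_eq_zero fun j hj => ?_
      rw [ih j (Finset.mem_range.mp hj), map_zero, zero_mul]
    rw [hz, zero_add, coeff_pow_self hg0, hg1, one_pow, mul_one] at hk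
    simpa using hk

/-- If `D = 1 + C(x·D(x)²)` and `D = 1 + x·D + 2x²·D'` with `C(0) = 0`, then
`2x·C·C' = C·(1 + C) - x`. -/
theorem connected_chord_ode (C D : ℚ⟦X⟧)
    (hC0 : PowerSeries.constantCoeff C = 0)
    (h1 : D = 1 + pcomp C (X * D ^ 2))
    (h2 : D = 1 + X * D + 2 * X ^ 2 * d⁄dX ℚ D) :
    2 * X * C * d⁄dX ℚ C = C * (1 + C) - X := by
  set u : ℚ⟦X⟧ := X * D ^ 2 with hu
  have hD0 : PowerSeries.constantCoeff D = 1 := by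
    have := congrArg (PowerSeries.constantCoeff) h2
    simpa using this
  have hu0 : PowerSeries.constantCoeff u = 0 := by simp [hu]
  have hu1 : PowerSeries.coeff 1 u = 1 := by
    rw [hu]
    have := PowerSeries.coeff_succ_X_mul 0 (D ^ 2)
    rw [this, coeff_zero_eq_constantCoeff_apply, map_pow, hD0, one_pow]
  have hA : pcomp C u = D - 1 := by rw [h1]; ring
  have hu' : d⁄dX ℚ u = D ^ 2 + 2 * X * D * d⁄dX ℚ D := by
    rw [hu, Derivation.leibniz, Derivation.leibniz_pow]
    simp only [Nat.add_sub_cancel, pow_one, smul_eq_mul, nsmul_eq_mul, Nat.cast_ofNat,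
      PowerSeries.derivative_X, mul_one]
    ring
  have hchain : d⁄dX ℚ D = pcomp (d⁄dX ℚ C) u * d⁄dX ℚ u := by
    have h := pcomp_deriv hu0 C
    rw [hA, map_sub, Derivation.map_one_eq_zero, sub_zero] at h
    exact h
  have hF : pcomp (2 * X * C * d⁄dX ℚ C - C - C ^ 2 + X) u
      = 2 * u * (D - 1) * pcomp (d⁄dX ℚ C) u - (D - 1) - (D - 1) ^ 2 + u := by
    rw [pcomp_add, pcomp_sub, pcomp_sub, pow_two, pcomp_mul hu0, pcomp_mul hu0,
      pcomp_mul hu0, pcomp_mul hu0, pcomp_two, pcomp_X hu0, hA]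
    ring
  have hkey : pcomp (2 * X * C * d⁄dX ℚ C - C - C ^ 2 + X) u * d⁄dX ℚ u = 0 := by
    have e1 : pcomp (2 * X * C * d⁄dX ℚ C - C - C ^ 2 + X) u * d⁄dX ℚ u
        = 2 * u * (D - 1) * (pcomp (d⁄dX ℚ C) u * d⁄dX ℚ u)
          - ((D - 1) + (D - 1) ^ 2 - u) * d⁄dX ℚ u := by
      rw [hF]; ring
    rw [e1, ← hchain, hu', hu]
    linear_combination (-(D ^ 3)) * h2
  have hnz : d⁄dX ℚ u ≠ 0 := by
    intro h
    have := congrArg (PowerSeries.constantCoeff) h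
    rw [hu'] at this
    simp [hD0] at this
  have hFz : pcomp (2 * X * C * d⁄dX ℚ C - C - C ^ 2 + X) u = 0 :=
    (mul_eq_zero.mp hkey).resolve_right hnz
  have hF0 : 2 * X * C * d⁄dX ℚ C - C - C ^ 2 + X = 0 := pcomp_inj hu0 hu1 hFz
  linear_combination hF0
end

section
/- For nonnegative integers n, k_1, k_2, the partial Bell polynomials satisfy B_{n, k_1+k_2}(x_1, x_2, ...) = (k_1!·k_2!/(k_1+k_2)!) · Σ_{α=0}^{n} binomial(n,α)·B_{α,k_1}(x_1,x_2,...)·B_{n-α,k_2}(x_1,x_2,...). -/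
open Finset

/- The partial Bell polynomial `B_{n,k}(x₁, x₂, …)`: the sum over all set
partitions of `{1,…,n}` into `k` nonempty blocks of the products of
`x_{block size}` over the blocks. -/
open Classical in
noncomputable def Bell (x : ℕ → ℚ) (n k : ℕ) : ℚ :=
  ∑ P ∈ Finset.univ.filter (fun P : Finset (Finset (Fin n)) =>
      P.card = k ∧ (∀ p ∈ P, p.Nonempty) ∧
      (∀ p ∈ P, ∀ q ∈ P, p ≠ q → p ∩ q = ∅) ∧ P.sup id = Finset.univ),
    ∏ p ∈ P, x p.card

namespace BellAux

open Classical in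
/-- Bell-type sum over partitions of a subset `S` of `Fin n`. -/
noncomputable def pbell (x : ℕ → ℚ) {n : ℕ} (S : Finset (Fin n)) (k : ℕ) : ℚ :=
  ∑ P ∈ Finset.univ.filter (fun P : Finset (Finset (Fin n)) =>
      P.card = k ∧ (∀ p ∈ P, p.Nonempty) ∧
      (∀ p ∈ P, ∀ q ∈ P, p ≠ q → p ∩ q = ∅) ∧ P.sup id = S),
    ∏ p ∈ P, x p.card

lemma pbell_univ (x : ℕ → ℚ) (n k : ℕ) : pbell x (Finset.univ : Finset (Fin n)) k = Bell x n k := rfl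

variable {n : ℕ}

/-- transport a block `p ⊆ S` to a subset of `Fin S.card`. -/
noncomputable def Fm (S : Finset (Fin n)) (p : Finset (Fin n)) : Finset (Fin S.card) :=
  (p.subtype (· ∈ S)).map S.equivFin.toEmbedding

/-- inverse transport. -/
noncomputable def Gm (S : Finset (Fin n)) (q : Finset (Fin S.card)) : Finset (Fin n) :=
  (q.map S.equivFin.symm.toEmbedding).map (Function.Embedding.subtype _)

lemma mem_Fm {S p : Finset (Fin n)} {a : Fin S.card} :
    a ∈ Fm S p ↔ (↑(S.equivFin.symm a) : Fin n) ∈ p := by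
  simp [Fm, Finset.mem_map_equiv, Finset.mem_subtype]

lemma mem_Gm {S : Finset (Fin n)} {q : Finset (Fin S.card)} {y : Fin n} :
    y ∈ Gm S q ↔ ∃ a ∈ q, (↑(S.equivFin.symm a) : Fin n) = y := by
  simp only [Gm, Finset.mem_map, Function.Embedding.coe_subtype, Equiv.coe_toEmbedding]
  constructor
  · rintro ⟨b, ⟨a, ha, rfl⟩, rfl⟩; exact ⟨a, ha, rfl⟩
  · rintro ⟨a, ha, rfl⟩; exact ⟨S.equivFin.symm a, ⟨a, ha, rfl⟩, rfl⟩

lemma Gm_Fm {S p : Finset (Fin n)} (hp : p ⊆ S) : Gm S (Fm S p) = p := by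
  ext y
  simp only [mem_Gm, mem_Fm]
  constructor
  · rintro ⟨a, ha, rfl⟩; exact ha
  · intro hy
    exact ⟨S.equivFin ⟨y, hp hy⟩, by simpa using hy, by simp⟩

lemma Fm_Gm {S : Finset (Fin n)} {q : Finset (Fin S.card)} : Fm S (Gm S q) = q := by
  ext a
  simp only [mem_Fm, mem_Gm]
  constructor
  · rintro ⟨b, hb, h⟩
    have hba : b = a := S.equivFin.symm.injective (Subtype.coe_injective h)
    rwa [hba] at hb
  · intro ha; exact ⟨a, ha, rfl⟩

lemma Gm_subset {S : Finset (Fin n)} {q : Finset (Fin S.card)} : Gm S q ⊆ S := by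
  intro y hy
  rw [mem_Gm] at hy
  obtain ⟨a, -, rfl⟩ := hy
  exact (S.equivFin.symm a).2

lemma card_Fm {S p : Finset (Fin n)} (hp : p ⊆ S) : (Fm S p).card = p.card := by
  rw [Fm, Finset.card_map, Finset.card_subtype, Finset.filter_true_of_mem (fun x hx => hp hx)]

lemma card_Gm {S : Finset (Fin n)} {q : Finset (Fin S.card)} : (Gm S q).card = q.card := by
  simp [Gm]

open Classical in
/-- Key transport lemma: the Bell sum over partitions of `S` equals `Bell x S.card k`. -/
lemma pbell_eq (x : ℕ → ℚ) (S : Finset (Fin n)) (k : ℕ) :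
    pbell x S k = Bell x S.card k := by
  rw [pbell, Bell]
  refine Finset.sum_nbij' (fun P => P.image (Fm S)) (fun Q => Q.image (Gm S)) ?_ ?_ ?_ ?_ ?_
  · -- membership forward
    intro P hP
    simp only [Finset.mem_filter, Finset.mem_univ, true_and] at hP ⊢
    obtain ⟨hcard, hne, hdisj, hsup⟩ := hP
    have hsub : ∀ p ∈ P, p ⊆ S := by
      intro p hp
      rw [← hsup]
      exact Finset.le_sup (f := id) hp
    have hinj : Set.InjOn (Fm S) ↑P := by
      intro p hp q hq h
      rw [← Gm_Fm (hsub p hp), h, Gm_Fm (hsub q hq)]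
    refine ⟨by rw [Finset.card_image_of_injOn hinj, hcard], ?_, ?_, ?_⟩
    · intro p' hp'
      obtain ⟨p, hp, rfl⟩ := Finset.mem_image.1 hp'
      obtain ⟨a, ha⟩ := hne p hp
      exact ⟨S.equivFin ⟨a, hsub p hp ha⟩, by rw [mem_Fm]; simpa using ha⟩
    · intro p' hp' q' hq' hne'
      obtain ⟨p, hp, rfl⟩ := Finset.mem_image.1 hp'
      obtain ⟨q, hq, rfl⟩ := Finset.mem_image.1 hq'
      have hpq : p ≠ q := by rintro rfl; exact hne' rfl
      have h0 := hdisj p hp q hq hpq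
      rw [Finset.eq_empty_iff_forall_notMem]
      intro a ha
      rw [Finset.mem_inter, mem_Fm, mem_Fm] at ha
      have : (↑(S.equivFin.symm a) : Fin n) ∈ p ∩ q := Finset.mem_inter.2 ha
      rw [h0] at this
      exact absurd this (Finset.notMem_empty _)
    · rw [Finset.eq_univ_iff_forall]
      intro a
      rw [Finset.mem_sup]
      have : (↑(S.equivFin.symm a) : Fin n) ∈ P.sup id := by
        rw [hsup]; exact (S.equivFin.symm a).2
      rw [Finset.mem_sup] at this
      obtain ⟨p, hp, hap⟩ := this
      exact ⟨Fm S p, Finset.mem_image_of_mem _ hp, mem_Fm.2 hap⟩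
  · -- membership backward
    intro Q hQ
    simp only [Finset.mem_filter, Finset.mem_univ, true_and] at hQ ⊢
    obtain ⟨hcard, hne, hdisj, hsup⟩ := hQ
    have hinj : Set.InjOn (Gm S) ↑Q := by
      intro p hp q hq h
      rw [← Fm_Gm (S := S) (q := p), h, Fm_Gm]
    refine ⟨by rw [Finset.card_image_of_injOn hinj, hcard], ?_, ?_, ?_⟩
    · intro p' hp'
      obtain ⟨q, hq, rfl⟩ := Finset.mem_image.1 hp'
      obtain ⟨a, ha⟩ := hne q hq
      exact ⟨↑(S.equivFin.symm a), mem_Gm.2 ⟨a, ha, rfl⟩⟩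
    · intro p' hp' q' hq' hne'
      obtain ⟨p, hp, rfl⟩ := Finset.mem_image.1 hp'
      obtain ⟨q, hq, rfl⟩ := Finset.mem_image.1 hq'
      have hpq : p ≠ q := by rintro rfl; exact hne' rfl
      have h0 := hdisj p hp q hq hpq
      rw [Finset.eq_empty_iff_forall_notMem]
      intro y hy
      rw [Finset.mem_inter, mem_Gm, mem_Gm] at hy
      obtain ⟨⟨a, ha, rfl⟩, ⟨b, hb, hba⟩⟩ := hy
      have : b = a := S.equivFin.symm.injective (Subtype.coe_injective hba)
      subst this
      have : b ∈ p ∩ q := Finset.mem_inter.2 ⟨ha, hb⟩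
      rw [h0] at this
      exact absurd this (Finset.notMem_empty _)
    · ext y
      rw [Finset.mem_sup]
      constructor
      · rintro ⟨p', hp', hy⟩
        obtain ⟨q, hq, rfl⟩ := Finset.mem_image.1 hp'
        exact Gm_subset hy
      · intro hy
        have : S.equivFin ⟨y, hy⟩ ∈ Q.sup id := by rw [hsup]; exact Finset.mem_univ _
        rw [Finset.mem_sup] at this
        obtain ⟨q, hq, haq⟩ := this
        exact ⟨Gm S q, Finset.mem_image_of_mem _ hq, mem_Gm.2 ⟨_, haq, by simp⟩⟩
  · -- left inverse
    intro P hP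
    simp only [Finset.mem_filter, Finset.mem_univ, true_and] at hP
    have hsub : ∀ p ∈ P, p ⊆ S := by
      intro p hp
      rw [← hP.2.2.2]
      exact Finset.le_sup (f := id) hp
    rw [Finset.image_image]
    calc P.image (Gm S ∘ Fm S) = P.image id := Finset.image_congr (fun p hp => Gm_Fm (hsub p hp))
      _ = P := Finset.image_id
  · -- right inverse
    intro Q hQ
    rw [Finset.image_image]
    calc Q.image (Fm S ∘ Gm S) = Q.image id := Finset.image_congr (fun q hq => Fm_Gm)
      _ = Q := Finset.image_id
  · -- values
    intro P hP
    simp only [Finset.mem_filter, Finset.mem_univ, true_and] at hP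
    have hsub : ∀ p ∈ P, p ⊆ S := by
      intro p hp
      rw [← hP.2.2.2]
      exact Finset.le_sup (f := id) hp
    have hinj : Set.InjOn (Fm S) ↑P := by
      intro p hp q hq h
      rw [← Gm_Fm (hsub p hp), h, Gm_Fm (hsub q hq)]
    rw [Finset.prod_image (fun p hp q hq => hinj hp hq)]
    exact Finset.prod_congr rfl (fun p hp => by rw [card_Fm (hsub p hp)])

open Classical in
/-- Double-counting identity. -/
lemma keyB (x : ℕ → ℚ) (n k₁ k₂ : ℕ) :
    (((k₁ + k₂).choose k₁ : ℕ) : ℚ) * Bell x n (k₁ + k₂)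
      = ∑ S : Finset (Fin n), pbell x S k₁ * pbell x Sᶜ k₂ := by
  rw [Bell, Finset.mul_sum]
  -- LHS as sum over sigma
  have hL : ∀ P ∈ Finset.univ.filter (fun P : Finset (Finset (Fin n)) =>
      P.card = k₁ + k₂ ∧ (∀ p ∈ P, p.Nonempty) ∧
      (∀ p ∈ P, ∀ q ∈ P, p ≠ q → p ∩ q = ∅) ∧ P.sup id = Finset.univ),
      (((k₁ + k₂).choose k₁ : ℕ) : ℚ) * ∏ p ∈ P, x p.card
        = ∑ Q ∈ P.powersetCard k₁, ∏ p ∈ P, x p.card := by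
    intro P hP
    simp only [Finset.mem_filter, Finset.mem_univ, true_and] at hP
    rw [Finset.sum_const, Finset.card_powersetCard, hP.1, nsmul_eq_mul]
  rw [Finset.sum_congr rfl hL, Finset.sum_sigma']
  -- RHS as sum over sigma
  have hR : ∀ S : Finset (Fin n), pbell x S k₁ * pbell x Sᶜ k₂
      = ∑ z ∈ (Finset.univ.filter (fun P : Finset (Finset (Fin n)) =>
            P.card = k₁ ∧ (∀ p ∈ P, p.Nonempty) ∧
            (∀ p ∈ P, ∀ q ∈ P, p ≠ q → p ∩ q = ∅) ∧ P.sup id = S)) ×ˢ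
          (Finset.univ.filter (fun P : Finset (Finset (Fin n)) =>
            P.card = k₂ ∧ (∀ p ∈ P, p.Nonempty) ∧
            (∀ p ∈ P, ∀ q ∈ P, p ≠ q → p ∩ q = ∅) ∧ P.sup id = Sᶜ)),
          (∏ p ∈ z.1, x p.card) * ∏ p ∈ z.2, x p.card := by
    intro S
    rw [pbell, pbell, Finset.sum_mul_sum, ← Finset.sum_product']
  rw [Finset.sum_congr rfl (fun S _ => hR S), Finset.sum_sigma']
  refine Finset.sum_nbij'
    (fun z => ⟨z.2.sup id, (z.2, z.1 \ z.2)⟩)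
    (fun w => ⟨w.2.1 ∪ w.2.2, w.2.1⟩) ?_ ?_ ?_ ?_ ?_
  · rintro ⟨P, Q⟩ hz
    simp only [Finset.mem_sigma, Finset.mem_filter, Finset.mem_univ, true_and,
      Finset.mem_powersetCard, Finset.mem_product] at hz ⊢
    obtain ⟨⟨hcard, hne, hdisj, hsup⟩, hQP, hQcard⟩ := hz
    refine ⟨⟨hQcard, fun p hp => hne p (hQP hp),
        fun p hp q hq h => hdisj p (hQP hp) q (hQP hq) h, trivial⟩,
      ?_, fun p hp => hne p (Finset.mem_sdiff.1 hp).1,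
      fun p hp q hq h => hdisj p (Finset.mem_sdiff.1 hp).1 q (Finset.mem_sdiff.1 hq).1 h, ?_⟩
    · rw [Finset.card_sdiff_of_subset hQP, hcard, hQcard]
      omega
    · ext y
      rw [Finset.mem_sup, Finset.mem_compl, Finset.mem_sup]
      constructor
      · rintro ⟨p, hp, hyp⟩
        rintro ⟨q, hq, hyq⟩
        obtain ⟨hpP, hpQ⟩ := Finset.mem_sdiff.1 hp
        have hpq : p ≠ q := by rintro rfl; exact hpQ hq
        have := hdisj p hpP q (hQP hq) hpq
        have : y ∈ p ∩ q := Finset.mem_inter.2 ⟨hyp, hyq⟩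
        rw [hdisj p hpP q (hQP hq) hpq] at this
        exact absurd this (Finset.notMem_empty _)
      · intro hy
        have : y ∈ P.sup id := by rw [hsup]; exact Finset.mem_univ _
        rw [Finset.mem_sup] at this
        obtain ⟨p, hp, hyp⟩ := this
        have hpQ : p ∉ Q := by
          intro hq
          exact hy ⟨p, hq, hyp⟩
        exact ⟨p, Finset.mem_sdiff.2 ⟨hp, hpQ⟩, hyp⟩
  · rintro ⟨S, P₁, P₂⟩ hw
    simp only [Finset.mem_sigma, Finset.mem_filter, Finset.mem_univ, true_and,
      Finset.mem_powersetCard, Finset.mem_product] at hw ⊢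
    obtain ⟨⟨hc1, hn1, hd1, hs1⟩, ⟨hc2, hn2, hd2, hs2⟩⟩ := hw
    have hsub1 : ∀ p ∈ P₁, p ⊆ S := by
      intro p hp; rw [← hs1]; exact Finset.le_sup (f := id) hp
    have hsub2 : ∀ p ∈ P₂, p ⊆ Sᶜ := by
      intro p hp; rw [← hs2]; exact Finset.le_sup (f := id) hp
    have hdisjP : Disjoint P₁ P₂ := by
      rw [Finset.disjoint_left]
      intro p hp1 hp2
      obtain ⟨a, ha⟩ := hn1 p hp1
      exact (Finset.mem_compl.1 (hsub2 p hp2 ha)) (hsub1 p hp1 ha)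
    refine ⟨⟨?_, ?_, ?_, ?_⟩, Finset.subset_union_left, hc1⟩
    · rw [Finset.card_union_of_disjoint hdisjP, hc1, hc2]
    · intro p hp
      rcases Finset.mem_union.1 hp with h | h
      · exact hn1 p h
      · exact hn2 p h
    · intro p hp q hq hpq
      have key : ∀ a b : Finset (Fin n), a ∈ P₁ → b ∈ P₂ → a ∩ b = ∅ := by
        intro a b ha hb
        rw [Finset.eq_empty_iff_forall_notMem]
        intro y hy
        rw [Finset.mem_inter] at hy
        exact (Finset.mem_compl.1 (hsub2 b hb hy.2)) (hsub1 a ha hy.1)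
      rcases Finset.mem_union.1 hp with h1 | h1 <;> rcases Finset.mem_union.1 hq with h2 | h2
      · exact hd1 p h1 q h2 hpq
      · exact key p q h1 h2
      · rw [Finset.inter_comm]; exact key q p h2 h1
      · exact hd2 p h1 q h2 hpq
    · rw [Finset.sup_union, hs1, hs2]
      rw [Finset.sup_eq_union, Finset.union_compl]
  · rintro ⟨P, Q⟩ hz
    simp only [Finset.mem_sigma, Finset.mem_filter, Finset.mem_univ, true_and,
      Finset.mem_powersetCard] at hz
    obtain ⟨-, hQP, -⟩ := hz
    simp only
    rw [Finset.union_sdiff_of_subset hQP]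
  · rintro ⟨S, P₁, P₂⟩ hw
    simp only [Finset.mem_sigma, Finset.mem_filter, Finset.mem_univ, true_and,
      Finset.mem_product] at hw
    obtain ⟨⟨hc1, hn1, hd1, hs1⟩, ⟨hc2, hn2, hd2, hs2⟩⟩ := hw
    have hsub1 : ∀ p ∈ P₁, p ⊆ S := by
      intro p hp; rw [← hs1]; exact Finset.le_sup (f := id) hp
    have hsub2 : ∀ p ∈ P₂, p ⊆ Sᶜ := by
      intro p hp; rw [← hs2]; exact Finset.le_sup (f := id) hp
    have hdisjP : Disjoint P₁ P₂ := by
      rw [Finset.disjoint_left]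
      intro p hp1 hp2
      obtain ⟨a, ha⟩ := hn1 p hp1
      exact (Finset.mem_compl.1 (hsub2 p hp2 ha)) (hsub1 p hp1 ha)
    simp only
    rw [Finset.union_sdiff_cancel_left hdisjP]
    exact Sigma.ext hs1 (heq_of_eq rfl)
  · rintro ⟨P, Q⟩ hz
    simp only [Finset.mem_sigma, Finset.mem_filter, Finset.mem_univ, true_and,
      Finset.mem_powersetCard] at hz
    obtain ⟨-, hQP, -⟩ := hz
    simp only
    rw [mul_comm, Finset.prod_sdiff hQP]

end BellAux

open BellAux in
/-- Cvijović's convolution identity: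
`B_{n,k₁+k₂} = (k₁!·k₂!/(k₁+k₂)!) · Σ_{α=0}^n (n choose α)·B_{α,k₁}·B_{n-α,k₂}`. -/
theorem bell_convolution (x : ℕ → ℚ) (n k₁ k₂ : ℕ) :
    Bell x n (k₁ + k₂) =
      ((k₁.factorial * k₂.factorial : ℚ) / (k₁ + k₂).factorial) *
        ∑ α ∈ Finset.range (n + 1),
          (n.choose α : ℚ) * Bell x α k₁ * Bell x (n - α) k₂ := by
  have hB := keyB x n k₁ k₂
  have hstep : ∑ S : Finset (Fin n), pbell x S k₁ * pbell x Sᶜ k₂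
      = ∑ α ∈ Finset.range (n + 1),
          (n.choose α : ℚ) * Bell x α k₁ * Bell x (n - α) k₂ := by
    have h1 : ∀ S : Finset (Fin n), pbell x S k₁ * pbell x Sᶜ k₂
        = Bell x S.card k₁ * Bell x (n - S.card) k₂ := by
      intro S
      rw [pbell_eq, pbell_eq]
      congr 2
      rw [Finset.card_compl, Fintype.card_fin]
    rw [Finset.sum_congr rfl (fun S _ => h1 S)]
    rw [← Finset.powerset_univ, Finset.sum_powerset]
    rw [Finset.card_univ, Fintype.card_fin]
    refine Finset.sum_congr rfl ?_
    intro α hα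
    have h2 : ∀ S ∈ Finset.powersetCard α (Finset.univ : Finset (Fin n)),
        Bell x S.card k₁ * Bell x (n - S.card) k₂ = Bell x α k₁ * Bell x (n - α) k₂ := by
      intro S hS
      rw [(Finset.mem_powersetCard.1 hS).2]
    rw [Finset.sum_congr rfl h2, Finset.sum_const, Finset.card_powersetCard,
      Finset.card_univ, Fintype.card_fin, nsmul_eq_mul, mul_assoc]
  rw [hstep] at hB
  rw [← hB]
  have hnat : (k₁ + k₂).choose k₁ * k₁.factorial * k₂.factorial = (k₁ + k₂).factorial := by
    have h := Nat.choose_mul_factorial_mul_factorial (Nat.le_add_right k₁ k₂)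
    simpa [Nat.add_sub_cancel_left] using h
  have hfac : ((k₁ + k₂).factorial : ℚ) ≠ 0 := Nat.cast_ne_zero.2 (Nat.factorial_ne_zero _)
  have hone : ((k₁.factorial * k₂.factorial : ℚ) / (k₁ + k₂).factorial)
      * (((k₁ + k₂).choose k₁ : ℕ) : ℚ) = 1 := by
    rw [div_mul_eq_mul_div, div_eq_one_iff_eq hfac]
    push_cast [← hnat]
    ring
  rw [← mul_assoc, hone, one_mul]
end

section
/- For integers n > k ≥ 1, the partial Bell polynomials satisfy (n-k)·x_1·B_{n,k}(x_1, x_2, ...) = Σ_{α=1}^{n-k} binomial(n,α)·[(k+1) - (n+1)/(α+1)]·x_{α+1}·B_{n-α,k}(x_1, x_2, ...). -/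
open Finset

variable {γ : Type*} [DecidableEq γ]

def IsPart (s : Finset γ) (P : Finset (Finset γ)) : Prop :=
  (∀ p ∈ P, p.Nonempty) ∧
  (∀ p ∈ P, ∀ q ∈ P, p ≠ q → p ∩ q = ∅) ∧ P.sup id = s

lemma IsPart.block_subset {s : Finset γ} {P : Finset (Finset γ)} (h : IsPart s P)
    {p : Finset γ} (hp : p ∈ P) : p ⊆ s := by
  have := Finset.le_sup (f := id) hp
  rw [h.2.2] at this; exact this

lemma IsPart.erase {s : Finset γ} {P : Finset (Finset γ)} (h : IsPart s P)
    {b : Finset γ} (hb : b ∈ P) : IsPart (s \ b) (P.erase b) := by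
  refine ⟨fun p hp => h.1 p (Finset.mem_of_mem_erase hp), fun p hp q hq hpq =>
    h.2.1 p (Finset.mem_of_mem_erase hp) q (Finset.mem_of_mem_erase hq) hpq, ?_⟩
  apply le_antisymm
  · intro a ha
    rw [Finset.mem_sup] at ha
    obtain ⟨p, hp, hap⟩ := ha
    have hpP := Finset.mem_of_mem_erase hp
    have hpb : p ≠ b := Finset.ne_of_mem_erase hp
    rw [Finset.mem_sdiff]
    refine ⟨h.block_subset hpP hap, fun hab => ?_⟩
    have := h.2.1 p hpP b hb hpb
    have : a ∈ p ∩ b := Finset.mem_inter.2 ⟨hap, hab⟩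
    simp_all
  · intro a ha
    rw [Finset.mem_sdiff] at ha
    have := ha.1
    rw [← h.2.2, Finset.mem_sup] at this
    obtain ⟨p, hp, hap⟩ := this
    rw [Finset.mem_sup]
    exact ⟨p, Finset.mem_erase.2 ⟨fun he => ha.2 (he ▸ hap), hp⟩, hap⟩

lemma IsPart.insert {s' : Finset γ} {P' : Finset (Finset γ)} (h : IsPart s' P')
    {b : Finset γ} (hbne : b.Nonempty) (hdisj : b ∩ s' = ∅) :
    IsPart (b ∪ s') (Insert.insert b P') ∧ b ∉ P' := by
  have hbP' : b ∉ P' := by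
    intro hbP'
    have := h.block_subset hbP'
    obtain ⟨a, ha⟩ := hbne
    have : a ∈ b ∩ s' := Finset.mem_inter.2 ⟨ha, this ha⟩
    simp_all
  refine ⟨⟨?_, ?_, ?_⟩, hbP'⟩
  · intro p hp
    rcases Finset.mem_insert.1 hp with rfl | hp
    · exact hbne
    · exact h.1 p hp
  · intro p hp q hq hpq
    have key : ∀ q ∈ P', b ∩ q = ∅ := by
      intro q hq
      have hqs := h.block_subset hq
      rw [Finset.eq_empty_iff_forall_notMem]
      intro a ha
      rw [Finset.mem_inter] at ha
      have : a ∈ b ∩ s' := Finset.mem_inter.2 ⟨ha.1, hqs ha.2⟩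
      simp_all
    rcases Finset.mem_insert.1 hp with rfl | hp
    · rcases Finset.mem_insert.1 hq with rfl | hq
      · exact absurd rfl hpq
      · exact key q hq
    · rcases Finset.mem_insert.1 hq with hq' | hq
      · rw [hq', Finset.inter_comm]; exact key p hp
      · exact h.2.1 p hp q hq hpq
  · rw [Finset.sup_insert, h.2.2]; rfl

lemma IsPart.card_sum {s : Finset γ} {P : Finset (Finset γ)} (h : IsPart s P) :
    ∑ p ∈ P, p.card = s.card := by
  rw [← h.2.2, Finset.sup_eq_biUnion, Finset.card_biUnion]
  · simp
  · intro p hp q hq hpq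
    simpa [Finset.disjoint_iff_inter_eq_empty] using h.2.1 p hp q hq hpq

lemma IsPart.existsUnique {s : Finset γ} {P : Finset (Finset γ)} (h : IsPart s P)
    {a : γ} (ha : a ∈ s) : ∃! p, p ∈ P ∧ a ∈ p := by
  have ha' := ha
  rw [← h.2.2, Finset.mem_sup] at ha'
  obtain ⟨p, hp, hap⟩ := ha'
  refine ⟨p, ⟨hp, hap⟩, ?_⟩
  rintro q ⟨hq, haq⟩
  by_contra hne
  have h1 := h.2.1 q hq p hp hne
  have : a ∈ q ∩ p := Finset.mem_inter.2 ⟨haq, hap⟩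
  simp_all

open Classical in
noncomputable def PartsOf {γ : Type*} [DecidableEq γ] [Fintype γ] (s : Finset γ) (k : ℕ) :
    Finset (Finset (Finset γ)) :=
  Finset.univ.filter (fun P => P.card = k ∧ IsPart s P)

noncomputable def BellSet {γ : Type*} [DecidableEq γ] [Fintype γ] (x : ℕ → ℚ) (s : Finset γ) (k : ℕ) : ℚ :=
  ∑ P ∈ PartsOf s k, ∏ p ∈ P, x p.card

lemma bell_eq (x : ℕ → ℚ) (n k : ℕ) : Bell x n k = BellSet x (Finset.univ : Finset (Fin n)) k := by
  unfold Bell BellSet PartsOf IsPart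
  congr

lemma mem_partsOf {γ : Type*} [DecidableEq γ] [Fintype γ] {s : Finset γ} {k : ℕ} {P : Finset (Finset γ)} :
    P ∈ PartsOf s k ↔ P.card = k ∧ IsPart s P := by
  classical
  simp [PartsOf]

lemma bellSet_eq_zero {γ : Type*} [DecidableEq γ] [Fintype γ] (x : ℕ → ℚ) {s : Finset γ} {k : ℕ}
    (h : s.card < k) : BellSet x s k = 0 := by
  have he : PartsOf s k = ∅ := by
    rw [Finset.eq_empty_iff_forall_notMem]
    intro P hP
    rw [mem_partsOf] at hP
    obtain ⟨hcard, hpart⟩ := hP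
    have h1 : P.card ≤ ∑ p ∈ P, p.card := by
      calc P.card = ∑ _p ∈ P, 1 := by simp
      _ ≤ ∑ p ∈ P, p.card := Finset.sum_le_sum (fun p hp => Finset.card_pos.2 (hpart.1 p hp))
    rw [hpart.card_sum, hcard] at h1
    omega
  rw [BellSet, he, Finset.sum_empty]

lemma bellSet_image {γ δ : Type*} [DecidableEq γ] [DecidableEq δ] [Fintype γ] [Fintype δ]
    (x : ℕ → ℚ) {s : Finset γ} {k : ℕ} {f : γ → δ} (hf : Set.InjOn f ↑s) :
    BellSet x (s.image f) k = BellSet x s k := by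
  classical
  have key1 : ∀ p : Finset γ, p ⊆ s → s.filter (fun a => f a ∈ p.image f) = p := by
    intro p hp
    ext a
    simp only [Finset.mem_filter, Finset.mem_image]
    constructor
    · rintro ⟨has, b, hbp, hba⟩
      rwa [← hf (hp hbp) has hba]
    · intro hap
      exact ⟨hp hap, a, hap, rfl⟩
  have key2 : ∀ q : Finset δ, q ⊆ s.image f → (s.filter (fun a => f a ∈ q)).image f = q := by
    intro q hq
    ext a'
    simp only [Finset.mem_image, Finset.mem_filter]
    constructor
    · rintro ⟨a, ⟨_, haq⟩, rfl⟩
      exact haq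
    · intro ha'
      obtain ⟨a, has, rfl⟩ := Finset.mem_image.1 (hq ha')
      exact ⟨a, ⟨has, ha'⟩, rfl⟩
  have blockinj : ∀ p ⊆ s, ∀ q ⊆ s, p.image f = q.image f → p = q := by
    intro p hp q hq he
    rw [← key1 p hp, ← key1 q hq]
    exact Finset.filter_congr (fun a _ => by rw [he])
  refine Eq.symm (Finset.sum_nbij' (fun P => P.image (fun p => p.image f))
    (fun Q => Q.image (fun q => s.filter (fun a => f a ∈ q))) ?_ ?_ ?_ ?_ ?_)
  · -- hi
    intro P hP
    rw [mem_partsOf] at hP ⊢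
    obtain ⟨hc, hpart⟩ := hP
    have hinjP : Set.InjOn (fun p : Finset γ => p.image f) ↑P := fun p hp q hq he =>
      blockinj p (hpart.block_subset hp) q (hpart.block_subset hq) he
    refine ⟨by rw [Finset.card_image_of_injOn hinjP, hc], ?_, ?_, ?_⟩
    · intro p' hp'
      obtain ⟨p, hp, rfl⟩ := Finset.mem_image.1 hp'
      exact (hpart.1 p hp).image f
    · intro p' hp' q' hq' hne
      obtain ⟨p, hp, rfl⟩ := Finset.mem_image.1 hp'
      obtain ⟨q, hq, rfl⟩ := Finset.mem_image.1 hq'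
      have hpq : p ≠ q := fun h => hne (by rw [h])
      rw [Finset.eq_empty_iff_forall_notMem]
      intro a' ha'
      rw [Finset.mem_inter] at ha'
      obtain ⟨a, hap, ha1⟩ := Finset.mem_image.1 ha'.1
      obtain ⟨b, hbq, hb1⟩ := Finset.mem_image.1 ha'.2
      have : a = b := hf (hpart.block_subset hp hap) (hpart.block_subset hq hbq) (by rw [ha1, hb1])
      have : a ∈ p ∩ q := Finset.mem_inter.2 ⟨hap, this ▸ hbq⟩
      rw [hpart.2.1 p hp q hq hpq] at this
      exact absurd this (Finset.notMem_empty a)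
    · have hmem : ∀ a, a ∈ s ↔ ∃ p ∈ P, a ∈ p := by
        intro a
        rw [← hpart.2.2]
        simp [Finset.mem_sup]
      ext a'
      simp only [Finset.mem_sup, Finset.mem_image, id]
      constructor
      · rintro ⟨p', ⟨p, hp, rfl⟩, ha'⟩
        obtain ⟨a, hap, rfl⟩ := Finset.mem_image.1 ha'
        exact ⟨a, (hmem a).2 ⟨p, hp, hap⟩, rfl⟩
      · rintro ⟨a, has, rfl⟩
        obtain ⟨p, hp, hap⟩ := (hmem a).1 has
        exact ⟨p.image f, ⟨p, hp, rfl⟩, Finset.mem_image_of_mem f hap⟩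
  · -- hj
    intro Q hQ
    rw [mem_partsOf] at hQ ⊢
    obtain ⟨hc, hpart⟩ := hQ
    have hinjQ : Set.InjOn (fun q : Finset δ => s.filter (fun a => f a ∈ q)) ↑Q := by
      intro q hq q' hq' he
      rw [← key2 q (hpart.block_subset hq), ← key2 q' (hpart.block_subset hq')]
      simp only at he
      rw [he]
    refine ⟨by rw [Finset.card_image_of_injOn hinjQ, hc], ?_, ?_, ?_⟩
    · intro p hp
      obtain ⟨q, hq, rfl⟩ := Finset.mem_image.1 hp
      obtain ⟨a', ha'⟩ := hpart.1 q hq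
      obtain ⟨a, has, rfl⟩ := Finset.mem_image.1 (hpart.block_subset hq ha')
      exact ⟨a, Finset.mem_filter.2 ⟨has, ha'⟩⟩
    · intro p hp p' hp' hne
      obtain ⟨q, hq, rfl⟩ := Finset.mem_image.1 hp
      obtain ⟨q', hq', rfl⟩ := Finset.mem_image.1 hp'
      have hqq : q ≠ q' := fun h => hne (by rw [h])
      rw [Finset.eq_empty_iff_forall_notMem]
      intro a ha
      rw [Finset.mem_inter, Finset.mem_filter, Finset.mem_filter] at ha
      have : f a ∈ q ∩ q' := Finset.mem_inter.2 ⟨ha.1.2, ha.2.2⟩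
      rw [hpart.2.1 q hq q' hq' hqq] at this
      exact absurd this (Finset.notMem_empty _)
    · have hmem : ∀ a', a' ∈ s.image f ↔ ∃ q ∈ Q, a' ∈ q := by
        intro a'
        rw [← hpart.2.2]
        simp [Finset.mem_sup]
      ext a
      simp only [Finset.mem_sup, Finset.mem_image, id]
      constructor
      · rintro ⟨p, ⟨q, hq, rfl⟩, ha⟩
        exact (Finset.mem_filter.1 ha).1
      · intro has
        have : f a ∈ s.image f := Finset.mem_image_of_mem f has
        obtain ⟨q, hq, haq⟩ := (hmem (f a)).1 this
        exact ⟨s.filter (fun b => f b ∈ q), ⟨q, hq, rfl⟩, Finset.mem_filter.2 ⟨has, haq⟩⟩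
  · -- left inverse
    intro P hP
    rw [mem_partsOf] at hP
    rw [Finset.image_image]
    have : Set.EqOn ((fun q => s.filter (fun a => f a ∈ q)) ∘ fun p => p.image f) id ↑P :=
      fun p hp => key1 p (hP.2.block_subset hp)
    rw [Finset.image_congr this, Finset.image_id]
  · -- right inverse
    intro Q hQ
    rw [mem_partsOf] at hQ
    rw [Finset.image_image]
    have : Set.EqOn ((fun p => p.image f) ∘ fun q => s.filter (fun a => f a ∈ q)) id ↑Q :=
      fun q hq => key2 q (hQ.2.block_subset hq)
    rw [Finset.image_congr this, Finset.image_id]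
  · -- weights
    intro P hP
    rw [mem_partsOf] at hP
    rw [Finset.prod_image (fun p hp q hq he =>
      blockinj p (hP.2.block_subset hp) q (hP.2.block_subset hq) he)]
    refine Finset.prod_congr rfl (fun p hp => ?_)
    rw [Finset.card_image_of_injOn (hf.mono (by exact_mod_cast hP.2.block_subset hp))]

lemma bellSet_card_eq {γ δ : Type*} [DecidableEq γ] [DecidableEq δ] [Fintype γ] [Fintype δ]
    (x : ℕ → ℚ) {s : Finset γ} {t : Finset δ} {k : ℕ} (hk : 1 ≤ k) (h : s.card = t.card) :
    BellSet x s k = BellSet x t k := by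
  by_cases hc : s.card < k
  · rw [bellSet_eq_zero x hc, bellSet_eq_zero x (h ▸ hc)]
  · push_neg at hc
    have ht : t.Nonempty := Finset.card_pos.1 (by omega)
    obtain ⟨d0, _⟩ := ht
    have e : ↥s ≃ ↥t := Fintype.equivOfCardEq (by simpa [Fintype.card_coe] using h)
    classical
    set f : γ → δ := fun a => if ha : a ∈ s then (e ⟨a, ha⟩ : δ) else d0 with hfdef
    have hinj : Set.InjOn f ↑s := by
      intro a ha b hb hab
      simp only [hfdef, Finset.mem_coe] at ha hb hab
      rw [dif_pos ha, dif_pos hb] at hab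
      have := e.injective (Subtype.ext hab)
      exact congrArg Subtype.val this
    have hsub : s.image f ⊆ t := by
      intro b hb
      obtain ⟨a, ha, rfl⟩ := Finset.mem_image.1 hb
      simp only [hfdef]
      rw [dif_pos ha]
      exact Finset.coe_mem _
    have himg : s.image f = t :=
      Finset.eq_of_subset_of_card_le hsub (by rw [Finset.card_image_of_injOn hinj, h])
    rw [← himg, bellSet_image x hinj]

lemma group_sum {γ : Type*} [DecidableEq γ] (B : Finset (Finset γ)) (g : ℕ → ℚ) (n : ℕ)
    (hcard : ∀ b ∈ B, 1 ≤ b.card ∧ b.card ≤ n + 1) :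
    ∑ b ∈ B, g b.card =
      ∑ α ∈ Finset.range (n + 1), ((B.filter (fun b => b.card = α + 1)).card : ℚ) * g (α + 1) := by
  rw [← Finset.sum_fiberwise_of_maps_to (g := fun b : Finset γ => b.card - 1)
    (t := Finset.range (n + 1)) (fun b hb => Finset.mem_range.2 (by have := hcard b hb; omega))]
  refine Finset.sum_congr rfl (fun α _ => ?_)
  have hfe : B.filter (fun b => b.card - 1 = α) = B.filter (fun b => b.card = α + 1) :=
    Finset.filter_congr (fun b hb => by have := hcard b hb; omega)
  rw [hfe]
  rw [show (∑ b ∈ B.filter (fun b => b.card = α + 1), g b.card)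
      = ∑ _b ∈ B.filter (fun b => b.card = α + 1), g (α + 1) from
    Finset.sum_congr rfl (fun b hb => by rw [(Finset.mem_filter.1 hb).2])]
  rw [Finset.sum_const, nsmul_eq_mul]

set_option maxHeartbeats 1000000 in
lemma bell_rec1 (x : ℕ → ℚ) (n k : ℕ) (hk : 1 ≤ k) :
    Bell x (n+1) (k+1) =
      ∑ α ∈ Finset.range (n+1), (n.choose α : ℚ) * x (α+1) * Bell x (n-α) k := by
  classical
  set a₀ : Fin (n+1) := 0 with ha₀def
  set B : Finset (Finset (Fin (n+1))) := Finset.univ.filter (fun b => a₀ ∈ b) with hB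
  have hu : ∀ P ∈ PartsOf (Finset.univ : Finset (Fin (n+1))) (k+1), ∃! p, p ∈ P ∧ a₀ ∈ p :=
    fun P hP => (mem_partsOf.1 hP).2.existsUnique (Finset.mem_univ _)
  have step1 : BellSet x (Finset.univ : Finset (Fin (n+1))) (k+1)
      = ∑ q ∈ B.sigma (fun b => PartsOf ((Finset.univ : Finset (Fin (n+1))) \ b) k),
          x q.1.card * ∏ p ∈ q.2, x p.card := by
    rw [BellSet]
    refine Finset.sum_bij'
      (i := fun P hP => (⟨P.choose (fun p => a₀ ∈ p) (hu P hP),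
        P.erase (P.choose (fun p => a₀ ∈ p) (hu P hP))⟩ :
          Σ _b : Finset (Fin (n+1)), Finset (Finset (Fin (n+1)))))
      (j := fun q _ => Insert.insert q.1 q.2) ?_ ?_ ?_ ?_ ?_
    · intro P hP
      obtain ⟨hcard, hpart⟩ := mem_partsOf.1 hP
      have hc := Finset.choose_mem (fun p => a₀ ∈ p) P (hu P hP)
      have ha := Finset.choose_property (fun p => a₀ ∈ p) P (hu P hP)
      rw [Finset.mem_sigma]
      constructor
      · exact Finset.mem_filter.2 ⟨Finset.mem_univ _, ha⟩
      · rw [mem_partsOf]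
        exact ⟨by simp [Finset.card_erase_of_mem hc, hcard], hpart.erase hc⟩
    · rintro ⟨b, P'⟩ hq
      rw [Finset.mem_sigma] at hq
      have ha₀b : a₀ ∈ b := (Finset.mem_filter.1 hq.1).2
      have hbne : b.Nonempty := ⟨a₀, ha₀b⟩
      obtain ⟨hcard', hpart'⟩ := mem_partsOf.1 hq.2
      have hdisj : b ∩ ((Finset.univ : Finset (Fin (n+1))) \ b) = ∅ :=
        Finset.inter_sdiff_self b Finset.univ
      obtain ⟨hip, hbP'⟩ := hpart'.insert hbne hdisj
      rw [mem_partsOf]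
      refine ⟨by rw [Finset.card_insert_of_notMem hbP', hcard'], ?_⟩
      rwa [Finset.union_sdiff_of_subset (Finset.subset_univ b)] at hip
    · intro P hP
      exact Finset.insert_erase (Finset.choose_mem (fun p => a₀ ∈ p) P (hu P hP))
    · rintro ⟨b, P'⟩ hq
      rw [Finset.mem_sigma] at hq
      have ha₀b : a₀ ∈ b := (Finset.mem_filter.1 hq.1).2
      have hbne : b.Nonempty := ⟨a₀, ha₀b⟩
      obtain ⟨hcard', hpart'⟩ := mem_partsOf.1 hq.2
      have hdisj : b ∩ ((Finset.univ : Finset (Fin (n+1))) \ b) = ∅ :=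
        Finset.inter_sdiff_self b Finset.univ
      obtain ⟨_, hbP'⟩ := hpart'.insert hbne hdisj
      have hcb : ∀ (h : ∃! p, p ∈ Insert.insert b P' ∧ a₀ ∈ p),
          (Insert.insert b P').choose (fun p => a₀ ∈ p) h = b := fun h =>
        h.unique ⟨Finset.choose_mem _ _ h, Finset.choose_property _ _ h⟩
          ⟨Finset.mem_insert_self _ _, ha₀b⟩
      simp only [hcb]
      rw [Finset.erase_insert hbP']
    · intro P hP
      exact (Finset.mul_prod_erase P _ (Finset.choose_mem (fun p => a₀ ∈ p) P (hu P hP))).symm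
  have step2 : Bell x (n+1) (k+1) = ∑ b ∈ B, x b.card * Bell x (n+1-b.card) k := by
    rw [bell_eq, step1, Finset.sum_sigma]
    refine Finset.sum_congr rfl (fun b hb => ?_)
    dsimp only
    rw [← Finset.mul_sum, ← BellSet]
    congr 1
    rw [bell_eq]
    apply bellSet_card_eq x hk
    rw [Finset.card_sdiff_of_subset (Finset.subset_univ b)]
    simp
  rw [step2]
  have hgroup := group_sum B (fun c => x c * Bell x (n+1-c) k) n (fun b hb => by
    constructor
    · exact Finset.card_pos.2 ⟨a₀, (Finset.mem_filter.1 hb).2⟩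
    · simpa using Finset.card_le_univ b)
  rw [hgroup]
  refine Finset.sum_congr rfl (fun α hα => ?_)
  have hfib : (B.filter (fun b => b.card = α + 1)).card = n.choose α := by
    have : (B.filter (fun b => b.card = α + 1)).card
        = ((Finset.univ.erase a₀).powersetCard α).card := by
      refine Finset.card_bij' (fun b _ => b.erase a₀) (fun c _ => Insert.insert a₀ c) ?_ ?_ ?_ ?_
      · intro b hb
        rw [Finset.mem_filter, hB, Finset.mem_filter] at hb
        rw [Finset.mem_powersetCard]
        exact ⟨Finset.erase_subset_erase a₀ (Finset.subset_univ b),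
          by rw [Finset.card_erase_of_mem hb.1.2, hb.2]; omega⟩
      · intro c hc
        rw [Finset.mem_powersetCard] at hc
        have ha₀c : a₀ ∉ c := fun h => (Finset.notMem_erase a₀ _) (hc.1 h)
        rw [Finset.mem_filter, hB, Finset.mem_filter]
        exact ⟨⟨Finset.mem_univ _, Finset.mem_insert_self _ _⟩,
          by rw [Finset.card_insert_of_notMem ha₀c, hc.2]⟩
      · intro b hb
        rw [Finset.mem_filter, hB, Finset.mem_filter] at hb
        exact Finset.insert_erase hb.1.2
      · intro c hc
        rw [Finset.mem_powersetCard] at hc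
        exact Finset.erase_insert (fun h => (Finset.notMem_erase a₀ _) (hc.1 h))
    rw [this, Finset.card_powersetCard]
    congr 1
    rw [Finset.card_erase_of_mem (Finset.mem_univ _)]
    simp
  rw [hfib]
  show (n.choose α : ℚ) * (x (α + 1) * Bell x (n + 1 - (α + 1)) k) = _
  rw [show n + 1 - (α + 1) = n - α from by omega, ← mul_assoc]

set_option maxHeartbeats 1000000 in
lemma bell_rec2 (x : ℕ → ℚ) (n k : ℕ) (hk : 1 ≤ k) :
    ((k : ℚ) + 1) * Bell x (n+1) (k+1) =
      ∑ α ∈ Finset.range (n+1), (((n+1).choose (α+1) : ℕ) : ℚ) * x (α+1) * Bell x (n-α) k := by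
  classical
  set B₂ : Finset (Finset (Fin (n+1))) := Finset.univ.filter (fun b => b.Nonempty) with hB₂
  have step0 : ((k : ℚ) + 1) * Bell x (n+1) (k+1)
      = ∑ P ∈ PartsOf (Finset.univ : Finset (Fin (n+1))) (k+1), ∑ _b ∈ P, ∏ p ∈ P, x p.card := by
    rw [bell_eq, BellSet, Finset.mul_sum]
    refine Finset.sum_congr rfl (fun P hP => ?_)
    rw [Finset.sum_const, (mem_partsOf.1 hP).1, nsmul_eq_mul]
    push_cast
    ring
  have step1 : (∑ P ∈ PartsOf (Finset.univ : Finset (Fin (n+1))) (k+1), ∑ _b ∈ P, ∏ p ∈ P, x p.card)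
      = ∑ q ∈ B₂.sigma (fun b => PartsOf ((Finset.univ : Finset (Fin (n+1))) \ b) k),
          x q.1.card * ∏ p ∈ q.2, x p.card := by
    rw [Finset.sum_sigma']
    refine Finset.sum_bij'
      (i := fun q (_ : q ∈ (PartsOf (Finset.univ : Finset (Fin (n+1))) (k+1)).sigma (fun P => P)) =>
        (⟨q.2, q.1.erase q.2⟩ : Σ _b : Finset (Fin (n+1)), Finset (Finset (Fin (n+1)))))
      (j := fun q _ => (⟨Insert.insert q.1 q.2, q.1⟩ :
        Σ _P : Finset (Finset (Fin (n+1))), Finset (Fin (n+1)))) ?_ ?_ ?_ ?_ ?_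
    · rintro ⟨P, b⟩ hq
      rw [Finset.mem_sigma] at hq
      obtain ⟨hP, hb⟩ := hq
      obtain ⟨hcard, hpart⟩ := mem_partsOf.1 hP
      rw [Finset.mem_sigma]
      constructor
      · exact Finset.mem_filter.2 ⟨Finset.mem_univ _, hpart.1 b hb⟩
      · rw [mem_partsOf]
        exact ⟨by simp [Finset.card_erase_of_mem hb, hcard], hpart.erase hb⟩
    · rintro ⟨b, P'⟩ hq
      rw [Finset.mem_sigma] at hq
      have hbne : b.Nonempty := (Finset.mem_filter.1 hq.1).2
      obtain ⟨hcard', hpart'⟩ := mem_partsOf.1 hq.2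
      have hdisj : b ∩ ((Finset.univ : Finset (Fin (n+1))) \ b) = ∅ :=
        Finset.inter_sdiff_self b Finset.univ
      obtain ⟨hip, hbP'⟩ := hpart'.insert hbne hdisj
      rw [Finset.mem_sigma]
      constructor
      · rw [mem_partsOf]
        refine ⟨by rw [Finset.card_insert_of_notMem hbP', hcard'], ?_⟩
        rwa [Finset.union_sdiff_of_subset (Finset.subset_univ b)] at hip
      · exact Finset.mem_insert_self _ _
    · rintro ⟨P, b⟩ hq
      rw [Finset.mem_sigma] at hq
      dsimp only
      rw [Finset.insert_erase hq.2]
    · rintro ⟨b, P'⟩ hq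
      rw [Finset.mem_sigma] at hq
      have hbne : b.Nonempty := (Finset.mem_filter.1 hq.1).2
      obtain ⟨hcard', hpart'⟩ := mem_partsOf.1 hq.2
      have hdisj : b ∩ ((Finset.univ : Finset (Fin (n+1))) \ b) = ∅ :=
        Finset.inter_sdiff_self b Finset.univ
      obtain ⟨_, hbP'⟩ := hpart'.insert hbne hdisj
      dsimp only at hbP' ⊢
      rw [Finset.erase_insert hbP']
    · rintro ⟨P, b⟩ hq
      rw [Finset.mem_sigma] at hq
      exact (Finset.mul_prod_erase P _ hq.2).symm
  have step2 : ((k : ℚ) + 1) * Bell x (n+1) (k+1) = ∑ b ∈ B₂, x b.card * Bell x (n+1-b.card) k := by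
    rw [step0, step1, Finset.sum_sigma]
    refine Finset.sum_congr rfl (fun b hb => ?_)
    dsimp only
    rw [← Finset.mul_sum, ← BellSet]
    congr 1
    rw [bell_eq]
    apply bellSet_card_eq x hk
    rw [Finset.card_sdiff_of_subset (Finset.subset_univ b)]
    simp
  rw [step2]
  have hgroup := group_sum B₂ (fun c => x c * Bell x (n+1-c) k) n (fun b hb => by
    constructor
    · exact Finset.card_pos.2 (Finset.mem_filter.1 hb).2
    · simpa using Finset.card_le_univ b)
  rw [hgroup]
  refine Finset.sum_congr rfl (fun α hα => ?_)
  have hfib : (B₂.filter (fun b => b.card = α + 1)).card = (n+1).choose (α+1) := by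
    have he : B₂.filter (fun b => b.card = α + 1)
        = Finset.powersetCard (α+1) (Finset.univ : Finset (Fin (n+1))) := by
      ext b
      rw [Finset.mem_filter, hB₂, Finset.mem_filter, Finset.mem_powersetCard]
      constructor
      · rintro ⟨⟨_, _⟩, hc⟩
        exact ⟨Finset.subset_univ b, hc⟩
      · rintro ⟨_, hc⟩
        exact ⟨⟨Finset.mem_univ _, Finset.card_pos.1 (by omega)⟩, hc⟩
    rw [he, Finset.card_powersetCard]
    simp
  rw [hfib]
  show ((n+1).choose (α+1) : ℚ) * (x (α + 1) * Bell x (n + 1 - (α + 1)) k) = _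
  rw [show n + 1 - (α + 1) = n - α from by omega, ← mul_assoc]

/-- For `n > k ≥ 1`:
`(n-k)·x₁·B_{n,k} = Σ_{α=1}^{n-k} (n choose α)·[(k+1) - (n+1)/(α+1)]·x_{α+1}·B_{n-α,k}`. -/
theorem bell_cvijovic_main (x : ℕ → ℚ) (n k : ℕ) (hk : 1 ≤ k) (hkn : k < n) :
    ((n : ℚ) - k) * x 1 * Bell x n k =
      ∑ α ∈ Finset.Icc 1 (n - k),
        (n.choose α : ℚ) * (((k : ℚ) + 1) - ((n : ℚ) + 1) / ((α : ℚ) + 1)) *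
          x (α + 1) * Bell x (n - α) k := by
  set F : ℕ → ℚ := fun α => (n.choose α : ℚ) * (((k : ℚ) + 1) - ((n : ℚ) + 1) / ((α : ℚ) + 1)) *
    x (α + 1) * Bell x (n - α) k with hF
  have cast_choose : ∀ α : ℕ, (((n+1).choose (α+1) : ℕ) : ℚ)
      = (n.choose α : ℚ) * ((n : ℚ) + 1) / ((α : ℚ) + 1) := by
    intro α
    have h := Nat.add_one_mul_choose_eq n α
    have h' : (((n+1) * n.choose α : ℕ) : ℚ) = (((n+1).choose (α+1) * (α+1) : ℕ) : ℚ) := by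
      exact_mod_cast congrArg (Nat.cast : ℕ → ℚ) h
    push_cast at h'
    have hα : ((α : ℚ) + 1) ≠ 0 := by positivity
    field_simp
    linarith [h']
  have h1 := bell_rec1 x n k hk
  have h2 := bell_rec2 x n k hk
  have key : ∑ α ∈ Finset.range (n+1), F α = 0 := by
    have e1 : ∑ α ∈ Finset.range (n+1), F α
        = ((k : ℚ) + 1) * (∑ α ∈ Finset.range (n+1), (n.choose α : ℚ) * x (α+1) * Bell x (n-α) k)
          - ∑ α ∈ Finset.range (n+1), (((n+1).choose (α+1) : ℕ) : ℚ) * x (α+1) * Bell x (n-α) k := by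
      rw [Finset.mul_sum, ← Finset.sum_sub_distrib]
      refine Finset.sum_congr rfl (fun α _ => ?_)
      rw [hF, cast_choose α]
      ring
    rw [e1, ← h1, ← h2]
    ring
  have hins : Finset.range (n+1) = Insert.insert 0 (Finset.Icc 1 n) := by
    ext a
    simp only [Finset.mem_range, Finset.mem_insert, Finset.mem_Icc]
    omega
  rw [hins, Finset.sum_insert (by simp)] at key
  have hF0 : F 0 = ((k : ℚ) - n) * x 1 * Bell x n k := by
    simp only [hF]
    norm_num
  have hS : ∑ α ∈ Finset.Icc 1 n, F α = -F 0 := by linarith [key]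
  have hmain : ((n : ℚ) - k) * x 1 * Bell x n k = ∑ α ∈ Finset.Icc 1 n, F α := by
    rw [hS, hF0]
    ring
  rw [hmain]
  refine (Finset.sum_subset ?_ ?_).symm
  · intro a ha
    rw [Finset.mem_Icc] at ha ⊢
    omega
  · intro a ha ha'
    rw [Finset.mem_Icc] at ha
    rw [Finset.mem_Icc] at ha'
    have hna : n - a < k := by omega
    have hz : Bell x (n - a) k = 0 := by
      rw [bell_eq]
      apply bellSet_eq_zero
      simpa using hna
    simp only [hF, hz, mul_zero]
end

section
/- Faà di Bruno's formula: if f(t) = Σ_{n≥0} f_n t^n/n! and g(t) = Σ_{n≥1} g_n t^n/n! are exponential formal power series with g(0) = 0, then the coefficients of the composition h = f ∘ g satisfy h_n = Σ_{k=0}^{n} f_k · B_{n,k}(g_1, g_2, ...), where B_{n,k} are the partial Bell polynomials. -/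
open PowerSeries Finset

open Classical in
/-- Sum over ordered tuples of pairwise disjoint blocks with union `A`. -/
noncomputable def Stup (g : ℚ⟦X⟧) (n k : ℕ) (A : Finset (Fin n)) : ℚ :=
  ∑ p ∈ Finset.univ.filter (fun p : Fin k → Finset (Fin n) =>
      (∀ i j, i ≠ j → p i ∩ p j = ∅) ∧ Finset.univ.sup p = A),
    ∏ i, ((p i).card.factorial : ℚ) * PowerSeries.coeff (p i).card g

theorem Stup_succ (g : ℚ⟦X⟧) (n k : ℕ) (A : Finset (Fin n)) :
    Stup g n (k+1) A = ∑ T ∈ A.powerset,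
      ((T.card.factorial : ℚ) * PowerSeries.coeff T.card g) * Stup g n k (A \ T) := by
  classical
  unfold Stup
  rw [Finset.sum_filter, ← Equiv.sum_comp (Fin.consEquiv fun _ => Finset (Fin n))]
  rw [Fintype.sum_prod_type]
  have key : ∀ (T : Finset (Fin n)) (q : Fin k → Finset (Fin n)),
      ((∀ i j : Fin (k+1), i ≠ j → (Fin.cons T q : Fin (k+1) → Finset (Fin n)) i ∩ (Fin.cons T q : Fin (k+1) → Finset (Fin n)) j = ∅) ∧
        Finset.univ.sup (Fin.cons T q : Fin (k+1) → Finset (Fin n)) = A)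
      ↔ (T ⊆ A ∧ ((∀ i j : Fin k, i ≠ j → q i ∩ q j = ∅) ∧ Finset.univ.sup q = A \ T)) := by
    intro T q
    constructor
    · rintro ⟨hd, hs⟩
      have hTA : T ⊆ A := by
        rw [← hs]
        exact Finset.le_sup (f := Fin.cons T q) (Finset.mem_univ 0)
      refine ⟨hTA, fun i j hij => hd i.succ j.succ (by simpa using hij), le_antisymm ?_ ?_⟩
      · apply Finset.sup_le
        intro i _
        show q i ⊆ A \ T
        rw [Finset.subset_sdiff]
        constructor
        · rw [← hs]
          exact Finset.le_sup (f := Fin.cons T q) (Finset.mem_univ i.succ)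
        · rw [Finset.disjoint_iff_inter_eq_empty]
          exact hd i.succ 0 (Fin.succ_ne_zero i)
      · intro a ha
        rw [Finset.mem_sdiff] at ha
        have : a ∈ Finset.univ.sup (Fin.cons T q) := hs ▸ ha.1
        rw [Finset.mem_sup] at this
        obtain ⟨i, -, hi⟩ := this
        rcases Fin.eq_zero_or_eq_succ i with rfl | ⟨j, rfl⟩
        · exact absurd hi ha.2
        · rw [Finset.mem_sup]
          exact ⟨j, Finset.mem_univ j, hi⟩
    · rintro ⟨hTA, hd, hs⟩
      have hq : ∀ i, q i ⊆ A \ T := fun i => hs ▸ Finset.le_sup (Finset.mem_univ i)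
      constructor
      · intro i j hij
        rcases Fin.eq_zero_or_eq_succ i with rfl | ⟨i', rfl⟩ <;>
          rcases Fin.eq_zero_or_eq_succ j with rfl | ⟨j', rfl⟩
        · exact absurd rfl hij
        · simp only [Fin.cons_zero, Fin.cons_succ]
          rw [← Finset.disjoint_iff_inter_eq_empty]
          exact Finset.disjoint_sdiff.mono_right (hq j')
        · simp only [Fin.cons_zero, Fin.cons_succ]
          rw [← Finset.disjoint_iff_inter_eq_empty]
          exact (Finset.disjoint_sdiff.mono_right (hq i')).symm
        · simpa using hd i' j' (by simpa using hij)
      · apply le_antisymm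
        · apply Finset.sup_le
          intro i _
          rcases Fin.eq_zero_or_eq_succ i with rfl | ⟨i', rfl⟩
          · simpa using hTA
          · simpa using (hq i').trans (Finset.sdiff_subset)
        · intro a ha
          rw [Finset.mem_sup]
          by_cases haT : a ∈ T
          · exact ⟨0, Finset.mem_univ 0, haT⟩
          · have : a ∈ Finset.univ.sup q := by
              rw [hs, Finset.mem_sdiff]; exact ⟨ha, haT⟩
            rw [Finset.mem_sup] at this
            obtain ⟨i, -, hi⟩ := this
            exact ⟨i.succ, Finset.mem_univ _, by simpa using hi⟩
  have ce : ∀ (T : Finset (Fin n)) (q : Fin k → Finset (Fin n)),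
      (Fin.consEquiv fun _ => Finset (Fin n)) (T, q) = Fin.cons T q := fun _ _ => rfl
  simp only [ce]
  simp only [key, Fin.prod_univ_succ, Fin.cons_zero, Fin.cons_succ]
  rw [show A.powerset = Finset.univ.filter (· ⊆ A) by ext t; simp [Finset.mem_powerset]]
  rw [Finset.sum_filter]
  apply Finset.sum_congr rfl
  intro T _
  by_cases h : T ⊆ A <;>
    simp [h, ite_and, Finset.sum_filter, Finset.mul_sum, mul_ite]

theorem Stup_eq (g : ℚ⟦X⟧) (hg : PowerSeries.constantCoeff g = 0) (n : ℕ) :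
    ∀ (k : ℕ) (A : Finset (Fin n)),
      Stup g n k A = (A.card.factorial : ℚ) * PowerSeries.coeff A.card (g ^ k) := by
  intro k
  induction k with
  | zero =>
    intro A
    classical
    unfold Stup
    by_cases hA : A = ∅
    · subst hA
      rw [Finset.filter_true_of_mem (fun p _ => ⟨fun i j h => (Fin.elim0 i), by simp⟩)]
      simp [PowerSeries.coeff_one]
    · rw [Finset.filter_false_of_mem, Finset.sum_empty]
      · have : A.card ≠ 0 := by simpa [Finset.card_eq_zero] using hA
        simp [PowerSeries.coeff_one, this]
      · intro p _
        rintro ⟨-, hsup⟩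
        apply hA
        rw [← hsup]
        simp
  | succ k ih =>
    intro A
    classical
    rw [Stup_succ]
    simp only [ih]
    have hcard : ∀ T ∈ A.powerset, (A \ T).card = A.card - T.card := by
      intro T hT
      exact Finset.card_sdiff_of_subset (Finset.mem_powerset.mp hT)
    calc
      ∑ T ∈ A.powerset, ((T.card.factorial : ℚ) * PowerSeries.coeff T.card g) *
            (((A \ T).card.factorial : ℚ) * PowerSeries.coeff (A \ T).card (g ^ k))
          = ∑ T ∈ A.powerset, (((T.card.factorial : ℚ) * PowerSeries.coeff T.card g) *
            (((A.card - T.card).factorial : ℚ) *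
              PowerSeries.coeff (A.card - T.card) (g ^ k))) := by
            refine Finset.sum_congr rfl fun T hT => ?_
            rw [hcard T hT]
      _ = ∑ j ∈ Finset.range (A.card + 1), (A.card.choose j) •
            (((j.factorial : ℚ) * PowerSeries.coeff j g) *
            (((A.card - j).factorial : ℚ) * PowerSeries.coeff (A.card - j) (g ^ k))) := by
            rw [Finset.sum_powerset]
            refine Finset.sum_congr rfl fun j _ => ?_
            exact Finset.sum_powersetCard j A fun m =>
              ((m.factorial : ℚ) * PowerSeries.coeff m g) *
              (((A.card - m).factorial : ℚ) * PowerSeries.coeff (A.card - m) (g ^ k))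
      _ = (A.card.factorial : ℚ) * PowerSeries.coeff A.card (g ^ (k + 1)) := by
            rw [pow_succ', PowerSeries.coeff_mul,
              Finset.Nat.sum_antidiagonal_eq_sum_range_succ_mk, Finset.mul_sum]
            refine Finset.sum_congr rfl fun j hj => ?_
            have hle : j ≤ A.card := Nat.lt_succ_iff.mp (Finset.mem_range.mp hj)
            have hch := Nat.choose_mul_factorial_mul_factorial hle
            have : ((A.card.choose j * j.factorial * (A.card - j).factorial : ℕ) : ℚ)
                = ((A.card.factorial : ℕ) : ℚ) := by rw [hch]
            push_cast at this
            simp only [nsmul_eq_mul, Prod.fst, Prod.snd]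
            rw [← this]
            ring



theorem Stup_eq_bell (g : ℚ⟦X⟧) (hg : PowerSeries.constantCoeff g = 0) (n k : ℕ) :
    Stup g n k Finset.univ =
      (k.factorial : ℚ) * Bell (fun m => (m.factorial : ℚ) * PowerSeries.coeff m g) n k := by
  classical
  have hc0 : ((0:ℕ).factorial : ℚ) * PowerSeries.coeff 0 g = 0 := by
    simp [PowerSeries.coeff_zero_eq_constantCoeff, hg]
  set c : ℕ → ℚ := fun m => (m.factorial : ℚ) * PowerSeries.coeff m g with hc
  -- restrict to tuples with nonempty blocks
  have step1 : Stup g n k Finset.univ =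
      ∑ p ∈ Finset.univ.filter (fun p : Fin k → Finset (Fin n) =>
        ((∀ i j, i ≠ j → p i ∩ p j = ∅) ∧ Finset.univ.sup p = Finset.univ) ∧
        ∀ i, (p i).Nonempty), ∏ i, c (p i).card := by
    rw [Stup]
    rw [eq_comm]
    apply Finset.sum_subset
    · intro p hp
      rw [Finset.mem_filter] at hp ⊢
      exact ⟨hp.1, hp.2.1⟩
    · intro p hp hnp
      rw [Finset.mem_filter] at hp hnp
      push_neg at hnp
      obtain ⟨i, hi⟩ := hnp hp.1 hp.2
      apply Finset.prod_eq_zero (Finset.mem_univ i)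
      rw [hi]
      exact hc0
  rw [step1]
  -- group by the underlying partition
  have hmaps : ∀ p ∈ Finset.univ.filter (fun p : Fin k → Finset (Fin n) =>
        ((∀ i j, i ≠ j → p i ∩ p j = ∅) ∧ Finset.univ.sup p = Finset.univ) ∧
        ∀ i, (p i).Nonempty),
      Finset.image p Finset.univ ∈ Finset.univ.filter
        (fun P : Finset (Finset (Fin n)) =>
          P.card = k ∧ (∀ q ∈ P, q.Nonempty) ∧
          (∀ q ∈ P, ∀ r ∈ P, q ≠ r → q ∩ r = ∅) ∧ P.sup id = Finset.univ) := by
    intro p hp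
    rw [Finset.mem_filter] at hp
    obtain ⟨-, ⟨hd, hs⟩, hne⟩ := hp
    have hinj : Function.Injective p := by
      intro i j hij
      by_contra hne'
      have := hd i j hne'
      rw [hij, Finset.inter_self] at this
      exact (hne j).ne_empty this
    rw [Finset.mem_filter]
    refine ⟨Finset.mem_univ _, ?_, ?_, ?_, ?_⟩
    · rw [Finset.card_image_of_injective _ hinj, Finset.card_univ, Fintype.card_fin]
    · intro q hq
      obtain ⟨i, -, rfl⟩ := Finset.mem_image.mp hq
      exact hne i
    · intro q hq r hr hqr
      obtain ⟨i, -, rfl⟩ := Finset.mem_image.mp hq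
      obtain ⟨j, -, rfl⟩ := Finset.mem_image.mp hr
      exact hd i j (fun h => hqr (by rw [h]))
    · rw [Finset.sup_image]
      simpa using hs
  rw [← Finset.sum_fiberwise_of_maps_to hmaps]
  unfold Bell
  rw [Finset.mul_sum]
  refine Finset.sum_congr rfl fun P hP => ?_
  rw [Finset.mem_filter] at hP
  obtain ⟨-, hPk, hPne, hPdis, hPsup⟩ := hP
  -- identify the fiber
  have hfib : (Finset.univ.filter (fun p : Fin k → Finset (Fin n) =>
        ((∀ i j, i ≠ j → p i ∩ p j = ∅) ∧ Finset.univ.sup p = Finset.univ) ∧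
        ∀ i, (p i).Nonempty)).filter (fun p => Finset.image p Finset.univ = P) =
      Finset.univ.filter (fun p : Fin k → Finset (Fin n) =>
        Finset.image p Finset.univ = P) := by
    ext p
    simp only [Finset.mem_filter, Finset.mem_univ, true_and, Finset.filter_filter]
    constructor
    · rintro ⟨-, h⟩; exact h
    · intro himg
      have hinj : Function.Injective p := by
        have : Set.InjOn p ↑(Finset.univ : Finset (Fin k)) := by
          rw [← Finset.card_image_iff, himg, hPk, Finset.card_univ, Fintype.card_fin]
        intro i j hij
        exact this (Finset.mem_coe.mpr (Finset.mem_univ i))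
          (Finset.mem_coe.mpr (Finset.mem_univ j)) hij
      have hmem : ∀ i, p i ∈ P := fun i => himg ▸
        Finset.mem_image_of_mem p (Finset.mem_univ i)
      refine ⟨⟨⟨?_, ?_⟩, ?_⟩, himg⟩
      · intro i j hij
        exact hPdis _ (hmem i) _ (hmem j) (fun h => hij (hinj h))
      · have := Finset.sup_image (Finset.univ : Finset (Fin k)) p (id)
        rw [himg] at this
        rw [← hPsup, this]
        rfl
      · intro i
        exact hPne _ (hmem i)
  rw [hfib]
  -- all terms in the fiber are equal
  have hterm : ∀ p ∈ Finset.univ.filter (fun p : Fin k → Finset (Fin n) =>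
      Finset.image p Finset.univ = P), (∏ i, c (p i).card) = ∏ q ∈ P, c q.card := by
    intro p hp
    rw [Finset.mem_filter] at hp
    have himg := hp.2
    have hinj : Set.InjOn p ↑(Finset.univ : Finset (Fin k)) := by
      rw [← Finset.card_image_iff, himg, hPk, Finset.card_univ, Fintype.card_fin]
    rw [← himg, Finset.prod_image (fun i hi j hj h => hinj hi hj h)]
  rw [Finset.sum_congr rfl hterm, Finset.sum_const]
  -- count the fiber: bijections
  have hPcard : Fintype.card {x // x ∈ P} = k := by
    rw [Fintype.card_coe, hPk]
  have hmem' : ∀ (pp : {p : Fin k → Finset (Fin n) // Finset.image p Finset.univ = P})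
      (i : Fin k), pp.1 i ∈ P := by
    rintro ⟨p, hp⟩ i
    show p i ∈ P
    rw [← hp]
    exact Finset.mem_image_of_mem _ (Finset.mem_univ i)
  have hbij : ∀ p : {p : Fin k → Finset (Fin n) // Finset.image p Finset.univ = P},
      Function.Bijective (fun i => (⟨p.1 i, hmem' p i⟩ : {x // x ∈ P})) := by
    intro p
    rw [Fintype.bijective_iff_surjective_and_card]
    constructor
    · rintro ⟨q, hq⟩
      have hq2 : q ∈ Finset.image p.1 Finset.univ := by rw [p.2]; exact hq
      obtain ⟨i, -, hi⟩ := Finset.mem_image.mp hq2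
      exact ⟨i, Subtype.ext hi⟩
    · rw [Fintype.card_fin, hPcard]
  have e : {p : Fin k → Finset (Fin n) // Finset.image p Finset.univ = P} ≃
      (Fin k ≃ {x // x ∈ P}) :=
    { toFun := fun p => Equiv.ofBijective _ (hbij p)
      invFun := fun e => ⟨fun i => (e i : Finset (Fin n)), by
        ext q
        simp only [Finset.mem_image]
        constructor
        · rintro ⟨i, -, rfl⟩; exact (e i).2
        · intro hq
          exact ⟨e.symm ⟨q, hq⟩, Finset.mem_univ _, by rw [Equiv.apply_symm_apply]⟩⟩
      left_inv := fun p => Subtype.ext rfl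
      right_inv := fun e => Equiv.ext fun i => Subtype.ext rfl }
  have hcardfib : (Finset.univ.filter (fun p : Fin k → Finset (Fin n) =>
      Finset.image p Finset.univ = P)).card = k.factorial := by
    rw [← Fintype.card_subtype, Fintype.card_congr e,
      Fintype.card_equiv (Fintype.equivOfCardEq (by rw [Fintype.card_fin, hPcard])),
      Fintype.card_fin]
  rw [hcardfib, nsmul_eq_mul]

/-- Faà di Bruno's formula: if `g(0) = 0` then the exponential coefficients
`h_n = n!·[tⁿ](f ∘ g)` satisfy `h_n = Σ_{k=0}^n f_k · B_{n,k}(g₁, g₂, …)`,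
where `f_k = k!·[tᵏ]f` and `g_m = m!·[tᵐ]g`. -/
theorem faa_di_bruno (f g : ℚ⟦X⟧) (hg : PowerSeries.constantCoeff g = 0) (n : ℕ) :
    (n.factorial : ℚ) * PowerSeries.coeff n (pcomp f g) =
      ∑ k ∈ Finset.range (n + 1),
        (k.factorial : ℚ) * PowerSeries.coeff k f *
          Bell (fun m => (m.factorial : ℚ) * PowerSeries.coeff m g) n k := by
  classical
  unfold pcomp
  rw [PowerSeries.coeff_mk, Finset.mul_sum]
  refine Finset.sum_congr rfl fun k _ => ?_
  have h1 := Stup_eq g hg n k Finset.univ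
  rw [Finset.card_univ, Fintype.card_fin] at h1
  have h2 := Stup_eq_bell g hg n k
  rw [h1] at h2
  rw [mul_left_comm, h2]
  ring
end

section
/- Suppose I_0(x), Z(x), B(x) are formal power series with I_0(0) = 0 satisfying: (i) I_0(x) = x + 2x²·I_0'(x)/(1 - I_0(x)); (ii) Z(x) = x·(1/(1 - I_0(x)))²; (iii) Z(x) = x·B(Z(x)) where B(0) = 1. Then I_0(x) = x/(1 - x·B'(Z(x))). -/
open PowerSeries Finset

lemma coeff_pow_zero_of_lt {g : ℚ⟦X⟧} (hg : PowerSeries.constantCoeff g = 0)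
    {n k : ℕ} (h : n < k) : PowerSeries.coeff n (g ^ k) = 0 := by
  have : (X : ℚ⟦X⟧) ^ k ∣ g ^ k := pow_dvd_pow_of_dvd (PowerSeries.X_dvd_iff.2 hg) k
  exact (PowerSeries.X_pow_dvd_iff.1 this) n h

lemma coeff_aeval_trunc (f g : ℚ⟦X⟧) (m n : ℕ) :
    PowerSeries.coeff n (Polynomial.aeval g (PowerSeries.trunc m f)) =
      ∑ k ∈ Finset.range m, PowerSeries.coeff k f * PowerSeries.coeff n (g ^ k) := by
  rw [PowerSeries.trunc_apply, ← Finset.range_eq_Ico, map_sum, map_sum]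
  refine Finset.sum_congr rfl fun k _ => ?_
  rw [Polynomial.aeval_monomial]
  simp [PowerSeries.algebraMap_apply, PowerSeries.coeff_C_mul]

lemma pcomp_coeff_eq (f g : ℚ⟦X⟧) (hg : PowerSeries.constantCoeff g = 0)
    {n m : ℕ} (h : n < m) :
    PowerSeries.coeff n (pcomp f g) =
      PowerSeries.coeff n (Polynomial.aeval g (PowerSeries.trunc m f)) := by
  rw [pcomp, PowerSeries.coeff_mk, coeff_aeval_trunc]
  refine Finset.sum_subset (Finset.range_subset_range.2 h) fun k _ hk => ?_
  rw [Finset.mem_range, not_lt] at hk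
  rw [coeff_pow_zero_of_lt hg (lt_of_lt_of_le (Nat.lt_of_succ_le (le_refl _)) hk : n < k), mul_zero]

lemma derivative_pcomp (f g : ℚ⟦X⟧) (hg : PowerSeries.constantCoeff g = 0) :
    d⁄dX ℚ (pcomp f g) = pcomp (d⁄dX ℚ f) g * d⁄dX ℚ g := by
  ext n
  have lhs : PowerSeries.coeff n (d⁄dX ℚ (pcomp f g)) =
      PowerSeries.coeff n (d⁄dX ℚ (Polynomial.aeval g (PowerSeries.trunc (n + 2) f))) := by
    rw [PowerSeries.coeff_derivative, PowerSeries.coeff_derivative,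
      pcomp_coeff_eq f g hg (Nat.lt_succ_self (n + 1))]
  rw [lhs, Derivation.map_aeval, ← PowerSeries.trunc_derivative, smul_eq_mul,
    PowerSeries.coeff_mul, PowerSeries.coeff_mul]
  refine Finset.sum_congr rfl fun p hp => ?_
  have hp1 : p.1 < n + 1 := Nat.lt_succ_of_le
    (Finset.HasAntidiagonal.antidiagonal.fst_le (Finset.HasAntidiagonal.mem_antidiagonal.1 hp ▸ hp))
  rw [pcomp_coeff_eq (d⁄dX ℚ f) g hg hp1]

/-- If `I₀(0) = 0`, `I₀ = x + 2x²·I₀'/(1-I₀)`, `Z = x·(1/(1-I₀))²`, and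
`Z = x·B(Z)` with `B(0) = 1`, then `I₀ = x/(1 - x·B'(Z))`. -/
theorem indecomposable_formula (I₀ Z B : ℚ⟦X⟧)
    (hI0 : PowerSeries.constantCoeff I₀ = 0)
    (hB0 : PowerSeries.constantCoeff B = 1)
    (h1 : I₀ = X + 2 * X ^ 2 * d⁄dX ℚ I₀ * (1 - I₀)⁻¹)
    (h2 : Z = X * ((1 - I₀)⁻¹) ^ 2)
    (h3 : Z = X * pcomp B Z) :
    I₀ = X * (1 - X * pcomp (d⁄dX ℚ B) Z)⁻¹ := by
  have hZ0 : PowerSeries.constantCoeff Z = 0 := by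
    rw [h3]; simp
  set U : ℚ⟦X⟧ := (1 - I₀)⁻¹ with hU
  set P : ℚ⟦X⟧ := pcomp B Z with hP
  set Q : ℚ⟦X⟧ := pcomp (d⁄dX ℚ B) Z with hQ
  have hV : PowerSeries.constantCoeff (1 - I₀) = 1 := by simp [hI0]
  have hVU : (1 - I₀) * U = 1 := PowerSeries.mul_inv_cancel _ (by rw [hV]; exact one_ne_zero)
  -- derivative of U
  have hdU : d⁄dX ℚ U = d⁄dX ℚ I₀ * U ^ 2 := by
    rw [hU, PowerSeries.derivative_inv', map_sub, Derivation.map_one_eq_zero]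
    ring
  -- key identity I₀ * Z = X^2 * Z'
  have hdZ : d⁄dX ℚ Z = U ^ 2 + 2 * X * d⁄dX ℚ I₀ * U ^ 3 := by
    conv_lhs => rw [h2]
    rw [Derivation.leibniz, Derivation.leibniz_pow, hdU, PowerSeries.derivative_X]
    simp only [smul_eq_mul, nsmul_eq_mul]
    push_cast
    ring
  have hIZ : I₀ * Z = X ^ 2 * d⁄dX ℚ Z := by
    conv_lhs => rw [h1, h2]
    rw [hdZ]
    ring
  -- (1 - X*Q) * (X * Z') = Z
  have hdZ' : d⁄dX ℚ Z = P + X * (Q * d⁄dX ℚ Z) := by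
    conv_lhs => rw [h3]
    rw [Derivation.leibniz, derivative_pcomp B Z hZ0, PowerSeries.derivative_X, hP, hQ]
    simp only [smul_eq_mul]
    ring
  have hcancel : (1 - X * Q) * (X * d⁄dX ℚ Z) = Z := by
    have : X * d⁄dX ℚ Z = X * P + X * (X * (Q * d⁄dX ℚ Z)) := by
      linear_combination X * hdZ'
    rw [← h3] at this
    linear_combination this
  -- X * Z' ≠ 0
  have hc1 : PowerSeries.coeff 1 Z = 1 := by
    conv_lhs => rw [h3]
    rw [show (1 : ℕ) = 0 + 1 from rfl, PowerSeries.coeff_succ_X_mul, hP, pcomp,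
      PowerSeries.coeff_mk]
    simp [hB0]
  have hdZne : X * d⁄dX ℚ Z ≠ 0 := by
    intro h
    have := congrArg (PowerSeries.coeff 1) h
    rw [show (1 : ℕ) = 0 + 1 from rfl, PowerSeries.coeff_succ_X_mul,
      PowerSeries.coeff_derivative, hc1] at this
    simp at this
  -- conclude
  have hmain : I₀ * (1 - X * Q) = X := by
    have h5 : (I₀ * (1 - X * Q) - X) * (X * d⁄dX ℚ Z) = 0 := by
      have : I₀ * ((1 - X * Q) * (X * d⁄dX ℚ Z)) = X ^ 2 * d⁄dX ℚ Z := by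
        rw [hcancel, hIZ]
      linear_combination this
    rcases mul_eq_zero.1 h5 with h6 | h6
    · exact sub_eq_zero.1 h6
    · exact absurd h6 hdZne
  have hq0 : PowerSeries.constantCoeff (1 - X * Q) ≠ 0 := by simp
  calc I₀ = I₀ * ((1 - X * Q) * (1 - X * Q)⁻¹) := by
        rw [PowerSeries.mul_inv_cancel _ hq0, mul_one]
    _ = I₀ * (1 - X * Q) * (1 - X * Q)⁻¹ := by ring
    _ = X * (1 - X * Q)⁻¹ := by rw [hmain]
end
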